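/- Every infinite compact Hausdorff scattered space contains a nontrivial convergent sequence, i.e., an injective sequence converging to some point of the space. -/

import Mathlib

open Set Filter Topology

/-- A topological space is scattered if every nonempty subset has a point isolated in it. -/
def IsScatteredSpace (X : Type*) [TopologicalSpace X] : Prop :=
  ∀ S : Set X, S.Nonempty → ∃ x ∈ S, ∃ U : Set X, IsOpen U ∧ U ∩ S = {x}

/-- Every infinite compact Hausdorff scattered space contains a nontrivial convergent
sequence: an injective sequence converging to a point of the space. -/
theorem stmt4 (X : Type*) [TopologicalSpace X] [CompactSpace X] [T2Space X] [Infinite X]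
    (h : IsScatteredSpace X) :
    ∃ (u : ℕ → X) (x : X), Function.Injective u ∧ Tendsto u atTop (𝓝 x) := by
  classical
  -- the set of non-isolated points
  set S : Set X := {x | ¬ IsOpen ({x} : Set X)} with hS
  have hSne : S.Nonempty := by
    by_contra hne
    push_neg at hne
    have hall : ∀ x : X, IsOpen ({x} : Set X) := by
      intro x
      by_contra hx
      exact (hne ▸ hx : x ∈ (∅ : Set X))
    haveI : DiscreteTopology X := discreteTopology_iff_isOpen_singleton.mpr hall
    haveI : Finite X := finite_of_compact_of_discrete
    exact not_finite X
  obtain ⟨x, hxS, U, hUopen, hUS⟩ := h S hSne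
  have hxU : x ∈ U := by
    have hx : x ∈ U ∩ S := hUS ▸ rfl
    exact hx.1
  -- points of U other than x are isolated
  have hiso : ∀ y ∈ U, y ≠ x → IsOpen ({y} : Set X) := by
    intro y hyU hyx
    by_contra hy
    have : y ∈ U ∩ S := ⟨hyU, hy⟩
    rw [hUS] at this
    exact hyx this
  -- compact neighborhood inside U
  obtain ⟨K, hKc, hxK, hKU⟩ := exists_compact_subset hUopen hxU
  -- K \ {x} is infinite
  have hinf : (K \ {x}).Infinite := by
    intro hfin
    apply hxS
    have hcl : IsClosed (K \ {x}) := hfin.isClosed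
    have hVopen : IsOpen (interior K ∩ (K \ {x})ᶜ) :=
      isOpen_interior.inter hcl.isOpen_compl
    have heq : ({x} : Set X) = interior K ∩ (K \ {x})ᶜ := by
      apply Subset.antisymm
      · rintro y rfl
        exact ⟨hxK, by simp⟩
      · rintro y ⟨hy1, hy2⟩
        simp only [mem_compl_iff, mem_diff, not_and, not_not] at hy2
        exact hy2 (interior_subset hy1)
    show IsOpen ({x} : Set X)
    rw [heq]
    exact hVopen
  -- choose an injective sequence in K \ {x}
  set u : ℕ → X := fun n => (hinf.natEmbedding _ n : X) with hu
  have huinj : Function.Injective u := fun a b hab =>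
    (hinf.natEmbedding _).injective (Subtype.ext hab)
  have humem : ∀ n, u n ∈ K \ {x} := fun n => (hinf.natEmbedding _ n).2
  refine ⟨u, x, huinj, ?_⟩
  rw [tendsto_nhds]
  intro V hVopen hxV
  -- K \ V is compact and all its points are isolated, hence finite
  have hFc : IsCompact (K \ V) := hKc.diff hVopen
  have hFiso : ∀ y ∈ K \ V, IsOpen ({y} : Set X) := by
    rintro y ⟨hyK, hyV⟩
    have hyx : y ≠ x := fun hyx => hyV (hyx ▸ hxV)
    exact hiso y (hKU hyK) hyx
  have hFfin : (K \ V).Finite := by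
    have hcover : (K \ V) ⊆ ⋃ y ∈ (K \ V), ({y} : Set X) := fun y hy => mem_biUnion hy rfl
    obtain ⟨t, htsub, htfin, htcov⟩ := hFc.elim_finite_subcover_image hFiso hcover
    exact ((htfin.biUnion (fun y _ => finite_singleton y)).subset htcov)
  -- hence only finitely many terms of u lie outside V
  have hpre : {n : ℕ | ¬ u n ∈ V}.Finite := by
    have hsub : {n : ℕ | ¬ u n ∈ V} ⊆ u ⁻¹' (K \ V) := by
      intro n hn
      exact ⟨(humem n).1, hn⟩
    exact ((hFfin.preimage huinj.injOn).subset hsub)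
  rw [← Nat.cofinite_eq_atTop]
  exact eventually_cofinite.mpr hpre
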